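/- Let G be a group, N = [G,G] its commutator subgroup, and G₂ = G/[[G,G],G] the quotient by the third term of the lower central series. Then the kernel of the inflation map H²(G/N; ℚ) → H²(G; ℚ) (induced by G → G/N) coincides with the kernel of the inflation map H²(G/N; ℚ) → H²(G₂; ℚ) (induced by the quotient map G₂ → G₂/[G₂,G₂] ≅ G/N), where all cohomology is taken with trivial coefficients ℚ. -/

import Mathlib

open groupCohomology

/-- The map on 2-cocycles (with trivial `ℚ`-coefficients) induced by precomposition
with a group homomorphism `φ : G →* Q`. -/
noncomputable def pullTwoCocycles {G Q : Type} [Group G] [Group Q] (φ : G →* Q) :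
    cocycles₂ (Rep.trivial ℚ Q ℚ) →ₗ[ℚ] cocycles₂ (Rep.trivial ℚ G ℚ) :=
  LinearMap.restrict (LinearMap.funLeft ℚ ℚ (Prod.map φ φ))
    (fun f hf => by
      rw [mem_cocycles₂_def] at hf ⊢
      intro g h j
      simpa [LinearMap.funLeft, Rep.trivial_ρ_apply, Prod.map, map_mul] using
        hf (φ g) (φ h) (φ j))

/-- Degree-2 group cohomology as the quotient `Z²(G, A) ⧸ B²(G, A)` (the older Mathlib
definition of `groupCohomology.H2`). -/
abbrev quotH2 {k G : Type} [CommRing k] [Group G] (A : Rep k G) :=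
  cocycles₂ A ⧸ LinearMap.range ((d₁₂ A).hom.codRestrict (cocycles₂ A) fun c =>
    d₁₂_comp_d₂₃_apply A c)

/-- The map `H²(Q;ℚ) → H²(G;ℚ)` on degree-2 group cohomology with trivial coefficients
`ℚ` induced by a group homomorphism `φ : G →* Q`. -/
noncomputable def pullH2 {G Q : Type} [Group G] [Group Q] (φ : G →* Q) :
    quotH2 (Rep.trivial ℚ Q ℚ) →ₗ[ℚ] quotH2 (Rep.trivial ℚ G ℚ) :=
  Submodule.mapQ _ _ (pullTwoCocycles φ)
    (by
      rintro ⟨f, hf⟩ ⟨y, hy⟩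
      refine Submodule.mem_comap.2 ⟨LinearMap.funLeft ℚ ℚ φ y, ?_⟩
      apply Subtype.ext
      have hy' := congrArg Subtype.val hy
      funext gh
      have := congrFun hy' (Prod.map φ φ gh)
      simp only [LinearMap.codRestrict_apply] at hy' this ⊢
      simp only [pullTwoCocycles, LinearMap.restrict_apply, LinearMap.funLeft_apply,
        d₁₂_hom_apply, Rep.trivial_ρ_apply, Prod.map, map_mul] at this ⊢
      refine Eq.trans ?_ this
      change (d₁₂ (Rep.trivial ℚ G ℚ)).hom (LinearMap.funLeft ℚ ℚ φ y) gh =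
        (d₁₂ (Rep.trivial ℚ Q ℚ)).hom y (φ gh.1, φ gh.2)
      simp [map_mul])

/-- `[[G,G],G] ≤ [G,G]`, so the abelianization map kills `[[G,G],G]`. -/
theorem lcs3_le_ker_abelianizationOf (G : Type) [Group G] :
    ∀ x ∈ ⁅commutator G, (⊤ : Subgroup G)⁆, Abelianization.of (G := G) x = 1 := by
  intro x hx
  have hle : ⁅commutator G, (⊤ : Subgroup G)⁆ ≤ commutator G := by
    rw [commutator_def]
    exact Subgroup.commutator_mono le_top le_rfl
  exact (QuotientGroup.eq_one_iff x).2 (hle hx)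

section Aux

open groupCohomology

lemma mem_ker_pullH2_iff {G Q : Type} [Group G] [Group Q] (φ : G →* Q)
    (f : cocycles₂ (Rep.trivial ℚ Q ℚ)) :
    Submodule.Quotient.mk (p := LinearMap.range ((d₁₂ (Rep.trivial ℚ Q ℚ)).hom.codRestrict
      (cocycles₂ (Rep.trivial ℚ Q ℚ)) fun c => d₁₂_comp_d₂₃_apply (Rep.trivial ℚ Q ℚ) c)) f
        ∈ LinearMap.ker (pullH2 φ) ↔
      ∃ y : G → ℚ, ∀ g h : G, y h - y (g * h) + y g = f.1 (φ g, φ h) := by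
  rw [LinearMap.mem_ker, pullH2, Submodule.mapQ_apply, Submodule.Quotient.mk_eq_zero,
    LinearMap.mem_range]
  refine exists_congr fun y => ?_
  rw [Subtype.ext_iff, funext_iff, Prod.forall]
  exact forall₂_congr fun g h => Iff.rfl

end Aux

/-- With `N = [G,G]` and `G₂ = G/[[G,G],G]`, the kernel of the inflation map
`H²(G/N;ℚ) → H²(G;ℚ)` (induced by `G → G/N`) coincides with the kernel of the
inflation map `H²(G/N;ℚ) → H²(G₂;ℚ)` (induced by the quotient map
`G₂ → G₂/[G₂,G₂] ≅ G/N`, i.e. by the homomorphism `G₂ → G/N` descended from the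
abelianization map of `G`). -/
theorem ker_inflation_eq_ker_inflation_lcs3
    (G : Type) [Group G] :
    LinearMap.ker (pullH2 (Abelianization.of (G := G))) =
      LinearMap.ker (pullH2
        (QuotientGroup.lift ⁅commutator G, (⊤ : Subgroup G)⁆
          (Abelianization.of (G := G)) (lcs3_le_ker_abelianizationOf G))) := by
  ext x
  obtain ⟨f, rfl⟩ := Submodule.Quotient.mk_surjective _ x
  rw [mem_ker_pullH2_iff, mem_ker_pullH2_iff]
  constructor
  · rintro ⟨y, hy⟩
    set F : Abelianization G × Abelianization G → ℚ := f.1 with hF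
    replace hy : ∀ g h : G, y h - y (g * h) + y g =
        F (Abelianization.of g, Abelianization.of h) := hy
    have hmul : ∀ g h : G, y (g * h) =
        y g + y h - F (Abelianization.of g, Abelianization.of h) := fun g h => by
      have := hy g h; linarith
    have hy1 : F ((1 : Abelianization G), 1) = y 1 := by
      have h := hy 1 1
      rw [one_mul, map_one] at h
      linarith
    have hcoc : ∀ g h j : Abelianization G,
        F (h, j) - F (g * h, j) + F (g, h * j) - F (g, h) = 0 := fun g h j =>
      (mem_cocycles₂_def f.1).1 f.2 g h j
    have hfr : ∀ a : Abelianization G, F (a, 1) = y 1 := by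
      intro a
      have h := hcoc a 1 1
      simp only [mul_one, one_mul] at h
      rw [← hy1]; linarith
    have hfl : ∀ a : Abelianization G, F (1, a) = y 1 := by
      intro a
      have h := hcoc 1 1 a
      simp only [mul_one, one_mul] at h
      rw [← hy1]; linarith
    have hofγ2 : ∀ m : G, m ∈ commutator G → Abelianization.of m = 1 := fun m hm =>
      (QuotientGroup.eq_one_iff m).2 hm
    have hmulr : ∀ g m : G, m ∈ commutator G → y (g * m) = y g + y m - y 1 := by
      intro g m hm; rw [hmul, hofγ2 m hm, hfr]
    have hmull : ∀ m g : G, m ∈ commutator G → y (m * g) = y m + y g - y 1 := by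
      intro m g hm; rw [hmul, hofγ2 m hm, hfl]
    have hinv : ∀ m : G, m ∈ commutator G → y m⁻¹ = 2 * y 1 - y m := by
      intro m hm
      have h := hmulr m m⁻¹ (inv_mem hm)
      rw [mul_inv_cancel] at h
      linarith
    have hnormal : (commutator G).Normal := inferInstance
    open scoped commutatorElement in
    have hcommy : ∀ m g : G, m ∈ commutator G → y ⁅m, g⁆ = y 1 := by
      intro m g hm
      have hw : g * m⁻¹ * g⁻¹ ∈ commutator G := hnormal.conj_mem m⁻¹ (inv_mem hm) g
      have h1 : y (g * m⁻¹ * g⁻¹ * g) = y (g * m⁻¹ * g⁻¹) + y g - y 1 := hmull _ g hw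
      have h2 : y (g * m⁻¹) = y g + y m⁻¹ - y 1 := hmulr g m⁻¹ (inv_mem hm)
      have hwg : g * m⁻¹ * g⁻¹ * g = g * m⁻¹ := by group
      rw [hwg] at h1
      have hyw : y (g * m⁻¹ * g⁻¹) = y m⁻¹ := by linarith
      have h3 : y (m * (g * m⁻¹ * g⁻¹)) = y m + y (g * m⁻¹ * g⁻¹) - y 1 := hmull m _ hm
      have hcm : ⁅m, g⁆ = m * (g * m⁻¹ * g⁻¹) := by rw [commutatorElement_def]; group
      rw [hcm, h3, hyw, hinv m hm]; ring
    set L : Subgroup G :=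
      { carrier := {n : G | n ∈ commutator G ∧ y n = y 1}
        one_mem' := ⟨one_mem _, rfl⟩
        mul_mem' := by
          rintro a b ⟨ha, hya⟩ ⟨hb, hyb⟩
          refine ⟨mul_mem ha hb, ?_⟩
          rw [hmulr a b hb, hya, hyb]; ring
        inv_mem' := by
          rintro a ⟨ha, hya⟩
          exact ⟨inv_mem ha, by rw [hinv a ha, hya]; ring⟩ } with hL
    have hNL : ⁅commutator G, (⊤ : Subgroup G)⁆ ≤ L :=
      Subgroup.commutator_le.2 fun m hm g _ =>
        ⟨(commutator_def G) ▸
            Subgroup.commutator_mem_commutator (Subgroup.mem_top m) (Subgroup.mem_top g),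
          hcommy m g hm⟩
    have hcoset : ∀ a b : G, a⁻¹ * b ∈ ⁅commutator G, (⊤ : Subgroup G)⁆ → y a = y b := by
      intro a b hab
      obtain ⟨hmem, hy1'⟩ := hNL hab
      have h := hmulr a (a⁻¹ * b) hmem
      rw [mul_inv_cancel_left] at h
      rw [h, hy1']; ring
    refine ⟨fun x => Quotient.liftOn' x y
      (fun a b h => hcoset a b (QuotientGroup.leftRel_apply.1 h)), fun a b => ?_⟩
    exact Quotient.inductionOn₂' a b fun g h => hy g h
  · rintro ⟨y₂, hy₂⟩
    exact ⟨fun g => y₂ (QuotientGroup.mk g), fun g h => hy₂ (QuotientGroup.mk g) (QuotientGroup.mk h)⟩
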